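/- There is a bijection between noncrossing 2-colored matchings on {1,...,2n} and Guy's walks with 2n steps, i.e., lattice walks in the first quadrant ℤ≥0 × ℤ≥0 starting and ending at (0,0) with steps from {(1,0),(-1,0),(0,1),(0,-1)}. -/

import Mathlib

/-- A `2`-colored matching on `{1,…,2n}`. -/
def IsColoredMatching (n m : ℕ) (f : Fin (2*n) → Fin (2*n)) (c : Fin (2*n) → Fin m) : Prop :=
  (∀ i, f (f i) = i) ∧ (∀ i, f i ≠ i) ∧ (∀ i, c (f i) = c i)

/-- Noncrossing: no two arcs of the same color cross. -/
def IsNoncrossing (n m : ℕ) (f : Fin (2*n) → Fin (2*n)) (c : Fin (2*n) → Fin m) : Prop :=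
  ¬ ∃ i j : Fin (2*n), c i = c j ∧ i < j ∧ j < f i ∧ f i < f j

/-- A Guy's walk with `2n` steps, encoded by its positions: it starts and ends at the
origin, stays in the first quadrant, and uses unit steps in the four directions. -/
def IsGuyWalk (n : ℕ) (w : Fin (2*n + 1) → ℤ × ℤ) : Prop :=
  w 0 = (0, 0) ∧ w (Fin.last (2*n)) = (0, 0) ∧
  (∀ i : Fin (2*n),
    w i.succ - w i.castSucc ∈ ({(1, 0), (-1, 0), (0, 1), (0, -1)} : Set (ℤ × ℤ))) ∧
  ∀ i, 0 ≤ (w i).1 ∧ 0 ≤ (w i).2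

namespace Guy

lemma ivt_down (H : ℕ → ℤ) (hstep : ∀ k, H k - 1 ≤ H (k+1)) {a : ℕ} {t : ℤ} :
    ∀ b : ℕ, a ≤ b → t < H a → H b ≤ t → ∃ j, a < j ∧ j ≤ b ∧ H j = t := by
  intro b
  induction b with
  | zero =>
    intro hab ha hb
    have : a = 0 := Nat.le_zero.mp hab
    subst this; omega
  | succ b ih =>
    intro hab ha hb
    by_cases hEq : H (b+1) = t
    · have hane : a ≠ b + 1 := by rintro rfl; omega
      exact ⟨b+1, by omega, le_refl _, hEq⟩
    · have h1 : H b ≤ t := by have := hstep b; omega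
      have hane : a ≠ b + 1 := by rintro rfl; omega
      have hab' : a ≤ b := by omega
      obtain ⟨j, hj1, hj2, hj3⟩ := ih hab' ha h1
      exact ⟨j, hj1, by omega, hj3⟩

lemma ivt_up (H : ℕ → ℤ) (hstep : ∀ k, H (k+1) ≤ H k + 1) {a : ℕ} {t : ℤ} :
    ∀ b : ℕ, a ≤ b → H a ≤ t → t < H b → ∃ i, a ≤ i ∧ i < b ∧ H i = t := by
  intro b
  induction b with
  | zero =>
    intro hab ha hb
    have : a = 0 := Nat.le_zero.mp hab
    subst this; omega
  | succ b ih =>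
    intro hab ha hb
    by_cases hEq : H b = t
    · have hane : a ≠ b + 1 := by rintro rfl; omega
      exact ⟨b, by omega, by omega, hEq⟩
    · have h1 : t < H b := by have := hstep b; omega
      have hane : a ≠ b + 1 := by rintro rfl; omega
      have hab' : a ≤ b := by omega
      obtain ⟨i, hi1, hi2, hi3⟩ := ih hab' ha h1
      exact ⟨i, hi1, by omega, hi3⟩

/-- Walk-height hypotheses. -/
structure HOk (H : ℕ → ℤ) (N : ℕ) : Prop where
  step_le : ∀ k, H (k+1) ≤ H k + 1
  step_ge : ∀ k, H k - 1 ≤ H (k+1)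
  nn : ∀ k, 0 ≤ H k
  zero : H 0 = 0
  finish : H N = 0

noncomputable def mUp (H : ℕ → ℤ) (i : ℕ) : ℕ := sInf {j | i ≤ j ∧ H (j+1) = H i}

noncomputable def mDn (H : ℕ → ℤ) (j : ℕ) : ℕ := sSup {i | i ≤ j ∧ H i = H (j+1)}

lemma mUp_spec {H : ℕ → ℤ} {N : ℕ} (hH : HOk H N) {i : ℕ} (hiN : i < N)
    (hop : H (i+1) = H i + 1) :
    i < mUp H i ∧ mUp H i < N ∧ H (mUp H i + 1) = H i ∧
      (∀ k, i < k → k ≤ mUp H i → H i < H k) ∧ H (mUp H i + 1) = H (mUp H i) - 1 := by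
  set S : Set ℕ := {j | i ≤ j ∧ H (j+1) = H i} with hS
  have hmup : mUp H i = sInf S := rfl
  obtain ⟨m, hm1, hm2, hm3⟩ := ivt_down H hH.step_ge (a := i+1) (t := H i) N (by omega)
      (by omega) (by rw [hH.finish]; exact hH.nn i)
  have hw : m - 1 ∈ S := ⟨by omega, by rw [show m - 1 + 1 = m by omega]; exact hm3⟩
  have hne : S.Nonempty := ⟨m - 1, hw⟩
  have hmem : mUp H i ∈ S := Nat.sInf_mem hne
  have hleN : mUp H i < N := by
    have := Nat.sInf_le hw
    omega
  have hne' : mUp H i ≠ i := by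
    intro h
    have := hmem.2
    rw [h] at this; omega
  have hgt : i < mUp H i := lt_of_le_of_ne hmem.1 (Ne.symm hne')
  have hnotmem : ∀ k, i < k → k ≤ mUp H i → H k ≠ H i := by
    intro k hk1 hk2 hk3
    have hk1' : k - 1 ∈ S := ⟨by omega, by rw [show k - 1 + 1 = k by omega]; exact hk3⟩
    have := Nat.sInf_le hk1'
    rw [← hmup] at this
    omega
  have hstrict : ∀ k, i < k → k ≤ mUp H i → H i < H k := by
    intro k hk1 hk2
    rcases lt_or_ge (H i) (H k) with h | h
    · exact h
    · exfalso
      have hne2 : H k ≠ H i := hnotmem k hk1 hk2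
      obtain ⟨m', hm1', hm2', hm3'⟩ := ivt_down H hH.step_ge (a := i+1) (t := H i) k
        (by omega) (by omega) (by omega)
      exact hnotmem m' (by omega) (by omega) hm3'
  refine ⟨hgt, hleN, hmem.2, hstrict, ?_⟩
  have h1 := hstrict (mUp H i) hgt (le_refl _)
  have h2 := hH.step_ge (mUp H i)
  have h3 := hmem.2
  omega

lemma mDn_spec {H : ℕ → ℤ} {N : ℕ} (hH : HOk H N) {j : ℕ}
    (hcl : H (j+1) = H j - 1) :
    mDn H j < j ∧ H (mDn H j) = H (j+1) ∧
      (∀ k, mDn H j < k → k ≤ j → H (j+1) < H k) ∧ H (mDn H j + 1) = H (mDn H j) + 1 := by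
  set S : Set ℕ := {i | i ≤ j ∧ H i = H (j+1)} with hS
  have hmdn : mDn H j = sSup S := rfl
  obtain ⟨i0, hi1, hi2, hi3⟩ := ivt_up H hH.step_le (a := 0) (t := H (j+1)) j (Nat.zero_le _)
    (by rw [hH.zero]; exact hH.nn (j+1)) (by omega)
  have hw : i0 ∈ S := ⟨by omega, hi3⟩
  have hne : S.Nonempty := ⟨i0, hw⟩
  have hbdd : BddAbove S := ⟨j, fun x hx => hx.1⟩
  have hmem : mDn H j ∈ S := Nat.sSup_mem hne hbdd
  have hne' : mDn H j ≠ j := by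
    intro h
    have := hmem.2
    rw [h] at this; omega
  have hlt : mDn H j < j := lt_of_le_of_ne hmem.1 hne'
  have hnotmem : ∀ k, mDn H j < k → k ≤ j → H k ≠ H (j+1) := by
    intro k hk1 hk2 hk3
    have hks : k ∈ S := ⟨hk2, hk3⟩
    have := le_csSup hbdd hks
    rw [← hmdn] at this
    omega
  have hstrict : ∀ k, mDn H j < k → k ≤ j → H (j+1) < H k := by
    intro k hk1 hk2
    rcases lt_or_ge (H (j+1)) (H k) with h | h
    · exact h
    · exfalso
      obtain ⟨m', hm1', hm2', hm3'⟩ := ivt_up H hH.step_le (a := k) (t := H (j+1)) j hk2 h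
        (by omega)
      exact hnotmem m' (by omega) (by omega) hm3'
  refine ⟨hlt, hmem.2, hstrict, ?_⟩
  have h1 := hstrict (mDn H j + 1) (by omega) (by omega)
  have h2 := hH.step_le (mDn H j)
  have h3 := hmem.2
  omega

lemma mUp_mDn {H : ℕ → ℤ} {N : ℕ} (hH : HOk H N) {i : ℕ} (hiN : i < N)
    (hop : H (i+1) = H i + 1) : mDn H (mUp H i) = i := by
  obtain ⟨h1, h2, h3, h4, h5⟩ := mUp_spec hH hiN hop
  set j := mUp H i
  set S : Set ℕ := {i' | i' ≤ j ∧ H i' = H (j+1)} with hS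
  have hiS : i ∈ S := ⟨le_of_lt h1, by omega⟩
  have hbdd : BddAbove S := ⟨j, fun x hx => hx.1⟩
  have hmdn : mDn H j = sSup S := rfl
  have hub : ∀ x ∈ S, x ≤ i := by
    intro x hx
    obtain ⟨hx1, hx2⟩ := hx
    by_contra hxi
    have := h4 x (by omega) hx1
    omega
  have hm := Nat.sSup_mem ⟨i, hiS⟩ hbdd
  have h6 := le_csSup hbdd hiS
  have h7 := hub _ hm
  rw [hmdn]
  exact le_antisymm h7 h6

lemma mDn_mUp {H : ℕ → ℤ} {N : ℕ} (hH : HOk H N) {j : ℕ}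
    (hcl : H (j+1) = H j - 1) : mUp H (mDn H j) = j := by
  obtain ⟨h1, h2, h3, h4⟩ := mDn_spec hH hcl
  set i := mDn H j
  set S : Set ℕ := {j' | i ≤ j' ∧ H (j'+1) = H i} with hS
  have hjS : j ∈ S := ⟨le_of_lt h1, by omega⟩
  have hmup : mUp H i = sInf S := rfl
  have hlb : ∀ x ∈ S, j ≤ x := by
    intro x hx
    obtain ⟨hx1, hx2⟩ := hx
    by_contra hxj
    have := h3 (x+1) (by omega) (by omega)
    omega
  have hmem := Nat.sInf_mem (⟨j, hjS⟩ : S.Nonempty)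
  rw [hmup]
  exact le_antisymm (Nat.sInf_le hjS) (hlb _ hmem)

lemma mUp_noncross {H : ℕ → ℤ} {N : ℕ} (hH : HOk H N) {i1 i2 : ℕ}
    (h1 : i1 < N) (h2 : i2 < N) (hop1 : H (i1+1) = H i1 + 1) (hop2 : H (i2+1) = H i2 + 1)
    (h12 : i1 < i2) (ha : i2 < mUp H i1) (hb : mUp H i1 < mUp H i2) : False := by
  obtain ⟨a1, a2, a3, a4, a5⟩ := mUp_spec hH h1 hop1
  obtain ⟨b1, b2, b3, b4, b5⟩ := mUp_spec hH h2 hop2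
  have k1 : H i1 < H i2 := a4 i2 h12 (le_of_lt ha)
  have k2 : H i2 < H (mUp H i1 + 1) := b4 (mUp H i1 + 1) (by omega) (by omega)
  omega

open Finset

section Matching

open scoped Classical

variable (n : ℕ) (f : Fin (2*n) → Fin (2*n)) (c : Fin (2*n) → Fin 2)

def isOp (a : Fin 2) (i : ℕ) : Prop :=
  ∃ h : i < 2*n, c ⟨i, h⟩ = a ∧ (⟨i, h⟩ : Fin (2*n)) < f ⟨i, h⟩

def isCl (a : Fin 2) (i : ℕ) : Prop :=
  ∃ h : i < 2*n, c ⟨i, h⟩ = a ∧ f ⟨i, h⟩ < (⟨i, h⟩ : Fin (2*n))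

noncomputable def sCol (a : Fin 2) (i : ℕ) : ℤ :=
  if isOp n f c a i then 1 else if isCl n f c a i then -1 else 0

noncomputable def HCol (a : Fin 2) (k : ℕ) : ℤ := ∑ i ∈ Finset.range k, sCol n f c a i

lemma sCol_bounds (a : Fin 2) (i : ℕ) : -1 ≤ sCol n f c a i ∧ sCol n f c a i ≤ 1 := by
  unfold sCol; split_ifs <;> omega

lemma sCol_zero_of_ge (a : Fin 2) {i : ℕ} (hi : 2*n ≤ i) : sCol n f c a i = 0 := by
  unfold sCol
  rw [if_neg, if_neg]
  · rintro ⟨h, -⟩; omega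
  · rintro ⟨h, -⟩; omega

lemma sum_sCol (a : Fin 2) (t : Finset ℕ) :
    ∑ i ∈ t, sCol n f c a i =
      ((t.filter (isOp n f c a)).card : ℤ) - ((t.filter (isCl n f c a)).card : ℤ) := by
  have hpt : ∀ i ∈ t, sCol n f c a i =
      (if isOp n f c a i then (1:ℤ) else 0) + (if isCl n f c a i then (-1:ℤ) else 0) := by
    intro i _
    unfold sCol
    split_ifs with h1 h2
    · exfalso
      obtain ⟨hlt, hc1, ho⟩ := h1
      obtain ⟨hlt', hc2, hcl⟩ := h2
      exact absurd ho (asymm hcl)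
    · ring
    · ring
    · ring
  rw [Finset.sum_congr rfl hpt, Finset.sum_add_distrib]
  have h1 : ∑ i ∈ t, (if isOp n f c a i then (1:ℤ) else 0) =
      ((t.filter (isOp n f c a)).card : ℤ) := by
    rw [Finset.sum_boole]
  have h2 : ∑ i ∈ t, (if isCl n f c a i then (-1:ℤ) else 0) =
      -((t.filter (isCl n f c a)).card : ℤ) := by
    have : ∀ i ∈ t, (if isCl n f c a i then (-1:ℤ) else 0) =
        -(if isCl n f c a i then (1:ℤ) else 0) := by
      intro i _; split_ifs <;> ring
    rw [Finset.sum_congr rfl this, Finset.sum_neg_distrib]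
    congr 1
    rw [Finset.sum_boole]
  rw [h1, h2]; ring

/-- The ℕ-valued partner function. -/
noncomputable def g (m : ℕ) : ℕ := if h : m < 2*n then ((f ⟨m, h⟩ : ℕ)) else 0

variable {n f c}

lemma g_isOp (hm : IsColoredMatching n 2 f c) {a : Fin 2} {m : ℕ} (hcl : isCl n f c a m) :
    isOp n f c a (g n f m) ∧ g n f m < m := by
  obtain ⟨h, hc1, hlt⟩ := hcl
  have hg : g n f m = ((f ⟨m, h⟩ : ℕ)) := dif_pos h
  have hfm : (f ⟨m, h⟩ : ℕ) < m := hlt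
  have hglt : g n f m < 2*n := by rw [hg]; exact (f ⟨m, h⟩).isLt
  have he : (⟨g n f m, hglt⟩ : Fin (2*n)) = f ⟨m, h⟩ := by
    apply Fin.ext; simp [hg]
  constructor
  · refine ⟨hglt, ?_, ?_⟩
    · rw [he, hm.2.2, hc1]
    · rw [he, hm.1]
      exact hlt
  · omega

lemma g_isCl (hm : IsColoredMatching n 2 f c) {a : Fin 2} {m : ℕ} (hop : isOp n f c a m) :
    isCl n f c a (g n f m) ∧ m < g n f m := by
  obtain ⟨h, hc1, hlt⟩ := hop
  have hg : g n f m = ((f ⟨m, h⟩ : ℕ)) := dif_pos h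
  have hfm : m < (f ⟨m, h⟩ : ℕ) := hlt
  have hglt : g n f m < 2*n := by rw [hg]; exact (f ⟨m, h⟩).isLt
  have he : (⟨g n f m, hglt⟩ : Fin (2*n)) = f ⟨m, h⟩ := by
    apply Fin.ext; simp [hg]
  constructor
  · refine ⟨hglt, ?_, ?_⟩
    · rw [he, hm.2.2, hc1]
    · rw [he, hm.1]
      exact hlt
  · omega

lemma g_injOn (hm : IsColoredMatching n 2 f c) {m1 m2 : ℕ} (h1 : m1 < 2*n) (h2 : m2 < 2*n)
    (h : g n f m1 = g n f m2) : m1 = m2 := by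
  rw [g, dif_pos h1, g, dif_pos h2] at h
  have : f ⟨m1, h1⟩ = f ⟨m2, h2⟩ := Fin.ext h
  have h2' := congrArg f this
  rw [hm.1, hm.1] at h2'
  simpa using congrArg Fin.val h2'

lemma card_cl_le_op (hm : IsColoredMatching n 2 f c) (a : Fin 2) (k : ℕ) :
    ((Finset.range k).filter (isCl n f c a)).card ≤
      ((Finset.range k).filter (isOp n f c a)).card := by
  apply Finset.card_le_card_of_injOn (g n f)
  · intro m hmm
    rw [Finset.mem_coe, Finset.mem_filter, Finset.mem_range] at hmm
    obtain ⟨hmk, hcl⟩ := hmm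
    obtain ⟨hop, hlt⟩ := g_isOp hm hcl
    rw [Finset.mem_coe, Finset.mem_filter, Finset.mem_range]
    exact ⟨by omega, hop⟩
  · intro m1 hm1 m2 hm2 h
    rw [Finset.coe_filter, Set.mem_setOf_eq] at hm1 hm2
    exact g_injOn hm hm1.2.1 hm2.2.1 h

lemma card_op_le_cl_full (hm : IsColoredMatching n 2 f c) (a : Fin 2) :
    ((Finset.range (2*n)).filter (isOp n f c a)).card ≤
      ((Finset.range (2*n)).filter (isCl n f c a)).card := by
  apply Finset.card_le_card_of_injOn (g n f)
  · intro m hmm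
    rw [Finset.mem_coe, Finset.mem_filter, Finset.mem_range] at hmm
    obtain ⟨hmk, hop⟩ := hmm
    obtain ⟨hcl, hlt⟩ := g_isCl hm hop
    rw [Finset.mem_coe, Finset.mem_filter, Finset.mem_range]
    exact ⟨hcl.1, hcl⟩
  · intro m1 hm1 m2 hm2 h
    rw [Finset.coe_filter, Set.mem_setOf_eq] at hm1 hm2
    exact g_injOn hm hm1.2.1 hm2.2.1 h

lemma HCol_succ (a : Fin 2) (k : ℕ) :
    HCol n f c a (k+1) = HCol n f c a k + sCol n f c a k := Finset.sum_range_succ _ _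

lemma HCol_nonneg (hm : IsColoredMatching n 2 f c) (a : Fin 2) (k : ℕ) :
    0 ≤ HCol n f c a k := by
  rw [HCol, sum_sCol]
  have := card_cl_le_op hm a k
  omega

lemma HCol_finish (hm : IsColoredMatching n 2 f c) (a : Fin 2) :
    HCol n f c a (2*n) = 0 := by
  rw [HCol, sum_sCol]
  have h1 := card_cl_le_op hm a (2*n)
  have h2 := card_op_le_cl_full hm a
  omega

lemma HOk_HCol (hm : IsColoredMatching n 2 f c) (a : Fin 2) : HOk (HCol n f c a) (2*n) where
  step_le := by
    intro k
    have := sCol_bounds n f c a k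
    rw [HCol_succ]; omega
  step_ge := by
    intro k
    have := sCol_bounds n f c a k
    rw [HCol_succ]; omega
  nn := HCol_nonneg hm a
  zero := by simp [HCol]
  finish := HCol_finish hm a

lemma isOp_coe {a : Fin 2} {i : Fin (2*n)} :
    isOp n f c a (i : ℕ) ↔ (c i = a ∧ i < f i) := by
  constructor
  · rintro ⟨h, h1, h2⟩
    rw [Fin.eta] at h1 h2
    exact ⟨h1, h2⟩
  · rintro ⟨h1, h2⟩
    refine ⟨i.isLt, ?_, ?_⟩
    · rw [Fin.eta]; exact h1
    · rw [Fin.eta]; exact h2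

lemma isCl_coe {a : Fin 2} {i : Fin (2*n)} :
    isCl n f c a (i : ℕ) ↔ (c i = a ∧ f i < i) := by
  constructor
  · rintro ⟨h, h1, h2⟩
    rw [Fin.eta] at h1 h2
    exact ⟨h1, h2⟩
  · rintro ⟨h1, h2⟩
    refine ⟨i.isLt, ?_, ?_⟩
    · rw [Fin.eta]; exact h1
    · rw [Fin.eta]; exact h2

lemma sCol_op {a : Fin 2} {i : Fin (2*n)} (h1 : c i = a) (h2 : i < f i) :
    sCol n f c a (i : ℕ) = 1 := by
  unfold sCol
  rw [if_pos (isOp_coe.mpr ⟨h1, h2⟩)]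

lemma sCol_cl {a : Fin 2} {i : Fin (2*n)} (h1 : c i = a) (h2 : f i < i) :
    sCol n f c a (i : ℕ) = -1 := by
  unfold sCol
  rw [if_neg, if_pos (isCl_coe.mpr ⟨h1, h2⟩)]
  intro hop
  exact absurd (isOp_coe.mp hop).2 (asymm h2)

lemma sCol_nc {a : Fin 2} {i : Fin (2*n)} (h1 : c i ≠ a) :
    sCol n f c a (i : ℕ) = 0 := by
  unfold sCol
  rw [if_neg, if_neg]
  · intro hcl; exact h1 (isCl_coe.mp hcl).1
  · intro hop; exact h1 (isOp_coe.mp hop).1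

lemma arc_confine (hm : IsColoredMatching n 2 f c) (hnc : IsNoncrossing n 2 f c)
    {j m : Fin (2*n)} (hj : f j < j) (h1 : f j < m) (h2 : m < j) (hcm : c m = c j) :
    f j < f m ∧ f m < j := by
  have hfinj : Function.Injective f := by
    intro x y hxy
    have := congrArg f hxy
    rwa [hm.1, hm.1] at this
  have hfi : f (f j) = j := hm.1 j
  have hne1 : f m ≠ f j := by
    intro h
    rw [hfinj h] at h2
    exact absurd h2 (lt_irrefl _)
  have hne2 : f m ≠ j := by
    intro h
    have h3 := congrArg f h
    rw [hm.1] at h3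
    rw [h3] at h1
    exact absurd h1 (lt_irrefl _)
  rcases lt_trichotomy (f m) (f j) with h | h | h
  · exfalso
    apply hnc
    refine ⟨f m, f j, ?_, h, ?_, ?_⟩
    · simp only [hm.2.2]; exact hcm
    · rw [hm.1]; exact h1
    · rw [hm.1, hfi]; exact h2
  · exact absurd h hne1
  · rcases lt_trichotomy (f m) j with h' | h' | h'
    · exact ⟨h, h'⟩
    · exact absurd h' hne2
    · exfalso
      apply hnc
      refine ⟨f j, m, ?_, h1, ?_, ?_⟩
      · simp only [hm.2.2]; exact hcm.symm
      · rw [hfi]; exact h2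
      · rw [hfi]; exact h'

lemma interval_cl_le (hm : IsColoredMatching n 2 f c) (hnc : IsNoncrossing n 2 f c)
    {j : Fin (2*n)} (hj : f j < j) {k : ℕ} (hk : k ≤ (j : ℕ)) :
    ((Finset.Ico ((f j : ℕ)+1) k).filter (isCl n f c (c j))).card ≤
      ((Finset.Ico ((f j : ℕ)+1) k).filter (isOp n f c (c j))).card := by
  apply Finset.card_le_card_of_injOn (g n f)
  · intro m hmm
    rw [Finset.mem_coe, Finset.mem_filter, Finset.mem_Ico] at hmm
    obtain ⟨⟨hm1, hm2⟩, hcl⟩ := hmm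
    obtain ⟨hlt2n, hc1, hclt⟩ := hcl
    have hMv : ((⟨m, hlt2n⟩ : Fin (2*n)) : ℕ) = m := rfl
    have hMj : (⟨m, hlt2n⟩ : Fin (2*n)) < j := by
      rw [Fin.lt_def, hMv]; omega
    have hfjM : f j < (⟨m, hlt2n⟩ : Fin (2*n)) := by
      rw [Fin.lt_def, hMv]; omega
    obtain ⟨hA, hB⟩ := arc_confine hm hnc hj hfjM hMj hc1
    obtain ⟨hop, hgm⟩ := g_isOp hm ⟨hlt2n, hc1, hclt⟩
    rw [Finset.mem_coe, Finset.mem_filter, Finset.mem_Ico]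
    have hgval : g n f m = (f ⟨m, hlt2n⟩ : ℕ) := dif_pos hlt2n
    have hAv := (Fin.lt_def).mp hA
    have hBv := (Fin.lt_def).mp hB
    refine ⟨⟨by omega, by omega⟩, hop⟩
  · intro m1 hm1 m2 hm2 h
    rw [Finset.coe_filter, Set.mem_setOf_eq] at hm1 hm2
    exact g_injOn hm hm1.2.1 hm2.2.1 h

lemma interval_op_le (hm : IsColoredMatching n 2 f c) (hnc : IsNoncrossing n 2 f c)
    {j : Fin (2*n)} (hj : f j < j) :
    ((Finset.Ico ((f j : ℕ)+1) (j : ℕ)).filter (isOp n f c (c j))).card ≤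
      ((Finset.Ico ((f j : ℕ)+1) (j : ℕ)).filter (isCl n f c (c j))).card := by
  apply Finset.card_le_card_of_injOn (g n f)
  · intro m hmm
    rw [Finset.mem_coe, Finset.mem_filter, Finset.mem_Ico] at hmm
    obtain ⟨⟨hm1, hm2⟩, hop⟩ := hmm
    obtain ⟨hlt2n, hc1, hopl⟩ := hop
    have hMv : ((⟨m, hlt2n⟩ : Fin (2*n)) : ℕ) = m := rfl
    have hMj : (⟨m, hlt2n⟩ : Fin (2*n)) < j := by
      rw [Fin.lt_def, hMv]; omega
    have hfjM : f j < (⟨m, hlt2n⟩ : Fin (2*n)) := by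
      rw [Fin.lt_def, hMv]; omega
    obtain ⟨hA, hB⟩ := arc_confine hm hnc hj hfjM hMj hc1
    obtain ⟨hcl, hgm⟩ := g_isCl hm ⟨hlt2n, hc1, hopl⟩
    rw [Finset.mem_coe, Finset.mem_filter, Finset.mem_Ico]
    have hAv := (Fin.lt_def).mp hA
    have hBv := (Fin.lt_def).mp hB
    have hgval : g n f m = (f ⟨m, hlt2n⟩ : ℕ) := dif_pos hlt2n
    refine ⟨⟨by omega, by omega⟩, hcl⟩
  · intro m1 hm1 m2 hm2 h
    rw [Finset.coe_filter, Set.mem_setOf_eq] at hm1 hm2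
    exact g_injOn hm hm1.2.1 hm2.2.1 h

lemma canonical (hm : IsColoredMatching n 2 f c) (hnc : IsNoncrossing n 2 f c)
    {j : Fin (2*n)} (hj : f j < j) :
    ((f j : ℕ)) = mDn (HCol n f c (c j)) (j : ℕ) := by
  have hpq : (f j : ℕ) < (j : ℕ) := (Fin.lt_def).mp hj
  set a := c j with ha
  set H := HCol n f c a with hH
  set p := (f j : ℕ) with hp
  set q := (j : ℕ) with hq
  have hcfj : c (f j) = a := hm.2.2 j
  have hopfj : f j < f (f j) := by rw [hm.1]; exact hj
  have hsq : sCol n f c a q = -1 := sCol_cl rfl hj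
  have hsp : sCol n f c a p = 1 := sCol_op hcfj hopfj
  have hclq : H (q+1) = H q - 1 := by
    rw [hH, HCol_succ, hsq]
    ring
  have hopp : H (p+1) = H p + 1 := by
    rw [hH, HCol_succ, hsp]
  have hsum : ∀ k, p + 1 ≤ k → (∑ i ∈ Finset.Ico (p+1) k, sCol n f c a i) = H k - H (p+1) := by
    intro k hk
    rw [hH]
    show _ = HCol n f c a k - HCol n f c a (p+1)
    rw [HCol, HCol, Finset.sum_Ico_eq_sub _ hk]
  have hstr : ∀ k, p < k → k ≤ q → H p < H k := by
    intro k hk1 hk2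
    have h1 : ((Finset.Ico (p+1) k).filter (isCl n f c a)).card ≤
        ((Finset.Ico (p+1) k).filter (isOp n f c a)).card :=
      interval_cl_le hm hnc hj hk2
    have h2 := hsum k (by omega)
    rw [sum_sCol] at h2
    omega
  have hbal : H p = H (q+1) := by
    have h1 : ((Finset.Ico (p+1) q).filter (isCl n f c a)).card ≤
        ((Finset.Ico (p+1) q).filter (isOp n f c a)).card :=
      interval_cl_le hm hnc hj (le_refl _)
    have h2 : ((Finset.Ico (p+1) q).filter (isOp n f c a)).card ≤
        ((Finset.Ico (p+1) q).filter (isCl n f c a)).card :=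
      interval_op_le hm hnc hj
    have h3 := hsum q (by omega)
    rw [sum_sCol] at h3
    omega
  set S : Set ℕ := {i | i ≤ q ∧ H i = H (q+1)} with hS
  have hmdn : mDn H q = sSup S := rfl
  have hpS : p ∈ S := ⟨by omega, hbal⟩
  have hbdd : BddAbove S := ⟨q, fun x hx => hx.1⟩
  have hmem : sSup S ∈ S := Nat.sSup_mem ⟨p, hpS⟩ hbdd
  have hple : p ≤ sSup S := le_csSup hbdd hpS
  rcases eq_or_lt_of_le hple with h | h
  · rw [hmdn, ← h]
  · exfalso
    have := hstr (sSup S) h hmem.1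
    have := hmem.2
    omega

variable (n f c) in
noncomputable def walkOf : Fin (2*n+1) → ℤ × ℤ :=
  fun k => (HCol n f c 0 (k : ℕ), HCol n f c 1 (k : ℕ))

lemma fin2cases (x : Fin 2) : x = 0 ∨ x = 1 := by omega

lemma walkOf_isGuyWalk (hm : IsColoredMatching n 2 f c) : IsGuyWalk n (walkOf n f c) := by
  refine ⟨?_, ?_, ?_, ?_⟩
  · show (HCol n f c 0 ((0 : Fin (2*n+1)) : ℕ), HCol n f c 1 _) = (0, 0)
    have : ((0 : Fin (2*n+1)) : ℕ) = 0 := rfl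
    rw [this]
    simp [HCol]
  · show (HCol n f c 0 ((Fin.last (2*n)) : ℕ), HCol n f c 1 _) = (0, 0)
    have : ((Fin.last (2*n)) : ℕ) = 2*n := rfl
    rw [this, HCol_finish hm 0, HCol_finish hm 1]
  · intro i
    have h1 : (i.succ : ℕ) = (i : ℕ) + 1 := rfl
    have h2 : (i.castSucc : ℕ) = (i : ℕ) := rfl
    have hstep : walkOf n f c i.succ - walkOf n f c i.castSucc
        = (sCol n f c 0 (i : ℕ), sCol n f c 1 (i : ℕ)) := by
      show (HCol n f c 0 (i.succ : ℕ), HCol n f c 1 (i.succ : ℕ)) -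
        (HCol n f c 0 (i.castSucc : ℕ), HCol n f c 1 (i.castSucc : ℕ)) = _
      rw [h1, h2, Prod.mk_sub_mk, HCol_succ, HCol_succ]
      congr 1 <;> ring
    rw [hstep]
    have hne := hm.2.1 i
    have hlt : i < f i ∨ f i < i := by
      rcases lt_trichotomy i (f i) with h | h | h
      · exact Or.inl h
      · exact absurd h.symm hne
      · exact Or.inr h
    rcases fin2cases (c i) with hc | hc <;> rcases hlt with h | h
    · rw [sCol_op hc h, sCol_nc (by rw [hc]; decide)]
      simp
    · rw [sCol_cl hc h, sCol_nc (by rw [hc]; decide)]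
      simp
    · rw [sCol_op hc h, sCol_nc (by rw [hc]; decide)]
      simp
    · rw [sCol_cl hc h, sCol_nc (by rw [hc]; decide)]
      simp
  · intro i
    exact ⟨HCol_nonneg hm 0 _, HCol_nonneg hm 1 _⟩

lemma walkOf_injective {f₁ f₂ : Fin (2*n) → Fin (2*n)} {c₁ c₂ : Fin (2*n) → Fin 2}
    (hm1 : IsColoredMatching n 2 f₁ c₁) (hnc1 : IsNoncrossing n 2 f₁ c₁)
    (hm2 : IsColoredMatching n 2 f₂ c₂) (hnc2 : IsNoncrossing n 2 f₂ c₂)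
    (h : walkOf n f₁ c₁ = walkOf n f₂ c₂) : f₁ = f₂ ∧ c₁ = c₂ := by
  have hHle : ∀ m, m ≤ 2*n →
      (HCol n f₁ c₁ 0 m = HCol n f₂ c₂ 0 m ∧ HCol n f₁ c₁ 1 m = HCol n f₂ c₂ 1 m) := by
    intro m hmle
    have hw := congrFun h ⟨m, by omega⟩
    exact ⟨congrArg Prod.fst hw, congrArg Prod.snd hw⟩
  have hs : ∀ (a : Fin 2) (i : ℕ), sCol n f₁ c₁ a i = sCol n f₂ c₂ a i := by
    intro a i
    by_cases hi : i < 2*n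
    · have e1 : sCol n f₁ c₁ a i = HCol n f₁ c₁ a (i+1) - HCol n f₁ c₁ a i := by
        rw [HCol_succ]; ring
      have e2 : sCol n f₂ c₂ a i = HCol n f₂ c₂ a (i+1) - HCol n f₂ c₂ a i := by
        rw [HCol_succ]; ring
      rcases fin2cases a with ha | ha <;> subst ha
      · rw [e1, e2, (hHle (i+1) (by omega)).1, (hHle i (by omega)).1]
      · rw [e1, e2, (hHle (i+1) (by omega)).2, (hHle i (by omega)).2]
    · rw [sCol_zero_of_ge n f₁ c₁ a (by omega), sCol_zero_of_ge n f₂ c₂ a (by omega)]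
  have hHall : ∀ (a : Fin 2), HCol n f₁ c₁ a = HCol n f₂ c₂ a := by
    intro a
    funext k
    unfold HCol
    exact Finset.sum_congr rfl fun i _ => hs a i
  have hself : ∀ (fx : Fin (2*n) → Fin (2*n)) (cx : Fin (2*n) → Fin 2),
      IsColoredMatching n 2 fx cx → ∀ i : Fin (2*n),
      (sCol n fx cx (cx i) (i : ℕ) = 1 ∧ i < fx i) ∨
      (sCol n fx cx (cx i) (i : ℕ) = -1 ∧ fx i < i) := by
    intro fx cx hmx i
    rcases lt_trichotomy i (fx i) with hlt | heq | hgt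
    · exact Or.inl ⟨sCol_op rfl hlt, hlt⟩
    · exact absurd heq.symm (hmx.2.1 i)
    · exact Or.inr ⟨sCol_cl rfl hgt, hgt⟩
  have hcc : c₁ = c₂ := by
    funext i
    by_contra hne
    have h2 : sCol n f₂ c₂ (c₁ i) (i : ℕ) = 0 := sCol_nc (fun hx => hne hx.symm)
    have h1 := hself f₁ c₁ hm1 i
    have h3 := hs (c₁ i) (i : ℕ)
    rcases h1 with ⟨h1, -⟩ | ⟨h1, -⟩ <;> omega
  have hpat : ∀ i : Fin (2*n), f₁ i < i → f₂ i < i := by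
    intro i hlt
    rcases hself f₂ c₂ hm2 i with ⟨h2, hp⟩ | ⟨-, hp⟩
    · exfalso
      rcases hself f₁ c₁ hm1 i with ⟨-, hp1⟩ | ⟨h1, -⟩
      · exact absurd hlt (asymm hp1)
      · have h3 := hs (c₁ i) (i : ℕ)
        rw [hcc] at h3 h1
        omega
    · exact hp
  have hcl : ∀ j : Fin (2*n), f₁ j < j → f₁ j = f₂ j := by
    intro j hj
    have hj2 : f₂ j < j := hpat j hj
    have e1 := canonical hm1 hnc1 hj
    have e2 := canonical hm2 hnc2 hj2
    rw [← hHall] at e2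
    rw [← hcc] at e2
    apply Fin.ext
    rw [e1, e2]
  constructor
  · funext i
    rcases lt_trichotomy (f₁ i) i with hlt | heq | hgt
    · exact hcl i hlt
    · exact absurd heq (hm1.2.1 i)
    · set j := f₁ i with hjdef
      have hfj : f₁ j = i := hm1.1 i
      have hjlt : f₁ j < j := by rw [hfj]; exact hgt
      have := hcl j hjlt
      rw [hfj] at this
      have h4 := congrArg f₂ this
      rw [hm2.1] at h4
      rw [← h4]
  · exact hcc

end Matching

section Surj

variable {n : ℕ} {w : Fin (2*n+1) → ℤ × ℤ}

/-- The step vector of a walk. -/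
def stepD (n : ℕ) (w : Fin (2*n+1) → ℤ × ℤ) (i : Fin (2*n)) : ℤ × ℤ :=
  w i.succ - w i.castSucc

/-- The x-height of a walk, extended by zero. -/
def HxOf (n : ℕ) (w : Fin (2*n+1) → ℤ × ℤ) : ℕ → ℤ :=
  fun k => if h : k ≤ 2*n then (w ⟨k, by omega⟩).1 else 0

def HyOf (n : ℕ) (w : Fin (2*n+1) → ℤ × ℤ) : ℕ → ℤ :=
  fun k => if h : k ≤ 2*n then (w ⟨k, by omega⟩).2 else 0

noncomputable def FOf (n : ℕ) (w : Fin (2*n+1) → ℤ × ℤ) (i : Fin (2*n)) : ℕ :=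
  if (stepD n w i).1 = 1 then mUp (HxOf n w) i
  else if (stepD n w i).1 = -1 then mDn (HxOf n w) i
  else if (stepD n w i).2 = 1 then mUp (HyOf n w) i
  else mDn (HyOf n w) i

def cOf (n : ℕ) (w : Fin (2*n+1) → ℤ × ℤ) (i : Fin (2*n)) : Fin 2 :=
  if (stepD n w i).1 = 0 then 1 else 0

lemma stepD_cases (hw : IsGuyWalk n w) (i : Fin (2*n)) :
    stepD n w i = (1,0) ∨ stepD n w i = (-1,0) ∨ stepD n w i = (0,1) ∨ stepD n w i = (0,-1) := by
  have h := hw.2.2.1 i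
  simpa [stepD, Set.mem_insert_iff] using h

lemma Hx_le {k : ℕ} (hk : k ≤ 2*n) : HxOf n w k = (w ⟨k, by omega⟩).1 := dif_pos hk

lemma Hy_le {k : ℕ} (hk : k ≤ 2*n) : HyOf n w k = (w ⟨k, by omega⟩).2 := dif_pos hk

lemma Hx_step (i : Fin (2*n)) :
    HxOf n w ((i:ℕ)+1) = HxOf n w (i:ℕ) + (stepD n w i).1 := by
  rw [Hx_le (by omega : (i:ℕ)+1 ≤ 2*n), Hx_le (by omega : (i:ℕ) ≤ 2*n)]
  have h1 : (⟨(i:ℕ)+1, by omega⟩ : Fin (2*n+1)) = i.succ := rfl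
  have h2 : (⟨(i:ℕ), by omega⟩ : Fin (2*n+1)) = i.castSucc := rfl
  rw [h1, h2, stepD, Prod.fst_sub]
  ring

lemma Hy_step (i : Fin (2*n)) :
    HyOf n w ((i:ℕ)+1) = HyOf n w (i:ℕ) + (stepD n w i).2 := by
  rw [Hy_le (by omega : (i:ℕ)+1 ≤ 2*n), Hy_le (by omega : (i:ℕ) ≤ 2*n)]
  have h1 : (⟨(i:ℕ)+1, by omega⟩ : Fin (2*n+1)) = i.succ := rfl
  have h2 : (⟨(i:ℕ), by omega⟩ : Fin (2*n+1)) = i.castSucc := rfl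
  rw [h1, h2, stepD, Prod.snd_sub]
  ring

lemma Hx_last (hw : IsGuyWalk n w) : HxOf n w (2*n) = 0 := by
  rw [Hx_le (le_refl _)]
  have : (⟨2*n, by omega⟩ : Fin (2*n+1)) = Fin.last (2*n) := rfl
  rw [this, hw.2.1]

lemma Hy_last (hw : IsGuyWalk n w) : HyOf n w (2*n) = 0 := by
  rw [Hy_le (le_refl _)]
  have : (⟨2*n, by omega⟩ : Fin (2*n+1)) = Fin.last (2*n) := rfl
  rw [this, hw.2.1]

lemma HOk_Hx (hw : IsGuyWalk n w) : HOk (HxOf n w) (2*n) := by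
  have hb : ∀ k, HxOf n w (k+1) ≤ HxOf n w k + 1 ∧ HxOf n w k - 1 ≤ HxOf n w (k+1) := by
    intro k
    by_cases hk : k < 2*n
    · have h := Hx_step (w := w) ⟨k, hk⟩
      rcases stepD_cases hw ⟨k, hk⟩ with h' | h' | h' | h' <;> rw [h'] at h <;>
        simp only [] at h <;> constructor <;> omega
    · by_cases hk2 : k = 2*n
      · subst hk2
        rw [Hx_last hw, show HxOf n w (2*n+1) = 0 from dif_neg (by omega)]
        omega
      · rw [show HxOf n w (k+1) = 0 from dif_neg (by omega),
          show HxOf n w k = 0 from dif_neg (by omega)]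
        omega
  refine ⟨fun k => (hb k).1, fun k => (hb k).2, ?_, ?_, Hx_last hw⟩
  · intro k
    by_cases hk : k ≤ 2*n
    · rw [Hx_le hk]
      exact (hw.2.2.2 _).1
    · rw [show HxOf n w k = 0 from dif_neg hk]
  · rw [Hx_le (by omega : 0 ≤ 2*n)]
    have : (⟨0, by omega⟩ : Fin (2*n+1)) = 0 := rfl
    rw [this, hw.1]

lemma HOk_Hy (hw : IsGuyWalk n w) : HOk (HyOf n w) (2*n) := by
  have hb : ∀ k, HyOf n w (k+1) ≤ HyOf n w k + 1 ∧ HyOf n w k - 1 ≤ HyOf n w (k+1) := by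
    intro k
    by_cases hk : k < 2*n
    · have h := Hy_step (w := w) ⟨k, hk⟩
      rcases stepD_cases hw ⟨k, hk⟩ with h' | h' | h' | h' <;> rw [h'] at h <;>
        simp only [] at h <;> constructor <;> omega
    · by_cases hk2 : k = 2*n
      · subst hk2
        rw [Hy_last hw, show HyOf n w (2*n+1) = 0 from dif_neg (by omega)]
        omega
      · rw [show HyOf n w (k+1) = 0 from dif_neg (by omega),
          show HyOf n w k = 0 from dif_neg (by omega)]
        omega
  refine ⟨fun k => (hb k).1, fun k => (hb k).2, ?_, ?_, Hy_last hw⟩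
  · intro k
    by_cases hk : k ≤ 2*n
    · rw [Hy_le hk]
      exact (hw.2.2.2 _).2
    · rw [show HyOf n w k = 0 from dif_neg hk]
  · rw [Hy_le (by omega : 0 ≤ 2*n)]
    have : (⟨0, by omega⟩ : Fin (2*n+1)) = 0 := rfl
    rw [this, hw.1]

lemma stepD_of_x_up (hw : IsGuyWalk n w) {j : Fin (2*n)}
    (h : HxOf n w ((j:ℕ)+1) = HxOf n w (j:ℕ) + 1) : stepD n w j = (1,0) := by
  have hst := Hx_step (w := w) j
  rcases stepD_cases hw j with h' | h' | h' | h' <;> rw [h'] at hst <;>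
    simp only [] at hst <;> first | exact h' | omega

lemma stepD_of_x_dn (hw : IsGuyWalk n w) {j : Fin (2*n)}
    (h : HxOf n w ((j:ℕ)+1) = HxOf n w (j:ℕ) - 1) : stepD n w j = (-1,0) := by
  have hst := Hx_step (w := w) j
  rcases stepD_cases hw j with h' | h' | h' | h' <;> rw [h'] at hst <;>
    simp only [] at hst <;> first | exact h' | omega

lemma stepD_of_y_up (hw : IsGuyWalk n w) {j : Fin (2*n)}
    (h : HyOf n w ((j:ℕ)+1) = HyOf n w (j:ℕ) + 1) : stepD n w j = (0,1) := by
  have hst := Hy_step (w := w) j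
  rcases stepD_cases hw j with h' | h' | h' | h' <;> rw [h'] at hst <;>
    simp only [] at hst <;> first | exact h' | omega

lemma stepD_of_y_dn (hw : IsGuyWalk n w) {j : Fin (2*n)}
    (h : HyOf n w ((j:ℕ)+1) = HyOf n w (j:ℕ) - 1) : stepD n w j = (0,-1) := by
  have hst := Hy_step (w := w) j
  rcases stepD_cases hw j with h' | h' | h' | h' <;> rw [h'] at hst <;>
    simp only [] at hst <;> first | exact h' | omega

lemma F_ux {i : Fin (2*n)} (h : stepD n w i = (1,0)) : FOf n w i = mUp (HxOf n w) i := by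
  simp [FOf, h]

lemma F_dx {i : Fin (2*n)} (h : stepD n w i = (-1,0)) : FOf n w i = mDn (HxOf n w) i := by
  norm_num [FOf, h]

lemma F_uy {i : Fin (2*n)} (h : stepD n w i = (0,1)) : FOf n w i = mUp (HyOf n w) i := by
  norm_num [FOf, h]

lemma F_dy {i : Fin (2*n)} (h : stepD n w i = (0,-1)) : FOf n w i = mDn (HyOf n w) i := by
  norm_num [FOf, h]

lemma hop_ux (h : stepD n w i = (1,0)) : HxOf n w ((i:ℕ)+1) = HxOf n w (i:ℕ) + 1 := by
  have := Hx_step (w := w) i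
  rw [h] at this
  simpa using this

lemma hcl_dx (h : stepD n w i = (-1,0)) : HxOf n w ((i:ℕ)+1) = HxOf n w (i:ℕ) - 1 := by
  have := Hx_step (w := w) i
  rw [h] at this
  simp only [] at this
  omega

lemma hop_uy (h : stepD n w i = (0,1)) : HyOf n w ((i:ℕ)+1) = HyOf n w (i:ℕ) + 1 := by
  have := Hy_step (w := w) i
  rw [h] at this
  simpa using this

lemma hcl_dy (h : stepD n w i = (0,-1)) : HyOf n w ((i:ℕ)+1) = HyOf n w (i:ℕ) - 1 := by
  have := Hy_step (w := w) i
  rw [h] at this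
  simp only [] at this
  omega

lemma FOf_lt (hw : IsGuyWalk n w) (i : Fin (2*n)) : FOf n w i < 2*n := by
  rcases stepD_cases hw i with h | h | h | h
  · rw [F_ux h]
    exact (mUp_spec (HOk_Hx hw) i.isLt (hop_ux h)).2.1
  · rw [F_dx h]
    exact lt_trans (mDn_spec (HOk_Hx hw) (hcl_dx h)).1 i.isLt
  · rw [F_uy h]
    exact (mUp_spec (HOk_Hy hw) i.isLt (hop_uy h)).2.1
  · rw [F_dy h]
    exact lt_trans (mDn_spec (HOk_Hy hw) (hcl_dy h)).1 i.isLt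

lemma exists_matching (hw : IsGuyWalk n w) :
    ∃ (f : Fin (2*n) → Fin (2*n)) (c : Fin (2*n) → Fin 2),
      IsColoredMatching n 2 f c ∧ IsNoncrossing n 2 f c ∧ walkOf n f c = w := by
  classical
  set f : Fin (2*n) → Fin (2*n) := fun i => ⟨FOf n w i, FOf_lt hw i⟩ with hfdef
  set c : Fin (2*n) → Fin 2 := fun i => cOf n w i with hcdef
  have hfval : ∀ i, (f i : ℕ) = FOf n w i := fun i => rfl
  have hcval : ∀ i, c i = cOf n w i := fun i => rfl
  have hinv : ∀ i, f (f i) = i := by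
    intro i
    apply Fin.ext
    rw [hfval]
    rcases stepD_cases hw i with h | h | h | h
    · have hop := hop_ux h
      have s5 := (mUp_spec (HOk_Hx hw) i.isLt hop).2.2.2.2
      have hfi : (f i : ℕ) = mUp (HxOf n w) i := by rw [hfval]; exact F_ux h
      have hd : stepD n w (f i) = (-1,0) := stepD_of_x_dn hw (by rw [hfi]; exact s5)
      rw [F_dx hd, hfi, mUp_mDn (HOk_Hx hw) i.isLt hop]
    · have hcl := hcl_dx h
      have s4 := (mDn_spec (HOk_Hx hw) hcl).2.2.2
      have hfi : (f i : ℕ) = mDn (HxOf n w) i := by rw [hfval]; exact F_dx h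
      have hd : stepD n w (f i) = (1,0) := stepD_of_x_up hw (by rw [hfi]; exact s4)
      rw [F_ux hd, hfi, mDn_mUp (HOk_Hx hw) hcl]
    · have hop := hop_uy h
      have s5 := (mUp_spec (HOk_Hy hw) i.isLt hop).2.2.2.2
      have hfi : (f i : ℕ) = mUp (HyOf n w) i := by rw [hfval]; exact F_uy h
      have hd : stepD n w (f i) = (0,-1) := stepD_of_y_dn hw (by rw [hfi]; exact s5)
      rw [F_dy hd, hfi, mUp_mDn (HOk_Hy hw) i.isLt hop]
    · have hcl := hcl_dy h
      have s4 := (mDn_spec (HOk_Hy hw) hcl).2.2.2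
      have hfi : (f i : ℕ) = mDn (HyOf n w) i := by rw [hfval]; exact F_dy h
      have hd : stepD n w (f i) = (0,1) := stepD_of_y_up hw (by rw [hfi]; exact s4)
      rw [F_uy hd, hfi, mDn_mUp (HOk_Hy hw) hcl]
  have hne : ∀ i, f i ≠ i := by
    intro i he
    have hv := congrArg Fin.val he
    rw [hfval] at hv
    rcases stepD_cases hw i with h | h | h | h
    · rw [F_ux h] at hv
      have := (mUp_spec (HOk_Hx hw) i.isLt (hop_ux h)).1
      omega
    · rw [F_dx h] at hv
      have := (mDn_spec (HOk_Hx hw) (hcl_dx h)).1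
      omega
    · rw [F_uy h] at hv
      have := (mUp_spec (HOk_Hy hw) i.isLt (hop_uy h)).1
      omega
    · rw [F_dy h] at hv
      have := (mDn_spec (HOk_Hy hw) (hcl_dy h)).1
      omega
  have hdf : ∀ i : Fin (2*n), stepD n w (f i) = - stepD n w i := by
    intro i
    rcases stepD_cases hw i with h | h | h | h
    · have s5 := (mUp_spec (HOk_Hx hw) i.isLt (hop_ux h)).2.2.2.2
      have hfi : (f i : ℕ) = mUp (HxOf n w) i := by rw [hfval]; exact F_ux h
      rw [stepD_of_x_dn hw (by rw [hfi]; exact s5), h]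
      norm_num
    · have s4 := (mDn_spec (HOk_Hx hw) (hcl_dx h)).2.2.2
      have hfi : (f i : ℕ) = mDn (HxOf n w) i := by rw [hfval]; exact F_dx h
      rw [stepD_of_x_up hw (by rw [hfi]; exact s4), h]
      norm_num
    · have s5 := (mUp_spec (HOk_Hy hw) i.isLt (hop_uy h)).2.2.2.2
      have hfi : (f i : ℕ) = mUp (HyOf n w) i := by rw [hfval]; exact F_uy h
      rw [stepD_of_y_dn hw (by rw [hfi]; exact s5), h]
      norm_num
    · have s4 := (mDn_spec (HOk_Hy hw) (hcl_dy h)).2.2.2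
      have hfi : (f i : ℕ) = mDn (HyOf n w) i := by rw [hfval]; exact F_dy h
      rw [stepD_of_y_up hw (by rw [hfi]; exact s4), h]
      norm_num
  have hcol : ∀ i, c (f i) = c i := by
    intro i
    rw [hcval, hcval, cOf, cOf, hdf i, Prod.fst_neg]
    simp only [neg_eq_zero]
  have hopf : ∀ i : Fin (2*n), i < f i →
      (stepD n w i = (1,0) ∧ (f i : ℕ) = mUp (HxOf n w) (i : ℕ)) ∨
      (stepD n w i = (0,1) ∧ (f i : ℕ) = mUp (HyOf n w) (i : ℕ)) := by
    intro i hi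
    have hiv : (i : ℕ) < (f i : ℕ) := Fin.lt_def.mp hi
    rcases stepD_cases hw i with h | h | h | h
    · exact Or.inl ⟨h, by rw [hfval]; exact F_ux h⟩
    · exfalso
      have h1 : (f i : ℕ) = mDn (HxOf n w) i := by rw [hfval]; exact F_dx h
      have := (mDn_spec (HOk_Hx hw) (hcl_dx h)).1
      omega
    · exact Or.inr ⟨h, by rw [hfval]; exact F_uy h⟩
    · exfalso
      have h1 : (f i : ℕ) = mDn (HyOf n w) i := by rw [hfval]; exact F_dy h
      have := (mDn_spec (HOk_Hy hw) (hcl_dy h)).1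
      omega
  have hncr : IsNoncrossing n 2 f c := by
    rintro ⟨i, j, hcij, h1, h2, h3⟩
    have h1v : (i : ℕ) < (j : ℕ) := Fin.lt_def.mp h1
    have h2v : (j : ℕ) < (f i : ℕ) := Fin.lt_def.mp h2
    have h3v : (f i : ℕ) < (f j : ℕ) := Fin.lt_def.mp h3
    rcases hopf i (lt_trans h1 h2) with ⟨hdi, hFi⟩ | ⟨hdi, hFi⟩ <;>
      rcases hopf j (lt_trans h2 h3) with ⟨hdj, hFj⟩ | ⟨hdj, hFj⟩
    · exact mUp_noncross (HOk_Hx hw) i.isLt j.isLt (hop_ux hdi) (hop_ux hdj) h1v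
        (by rw [← hFi]; exact h2v) (by rw [← hFi, ← hFj]; exact h3v)
    · have e1 : c i = 0 := by simp [hcval, cOf, hdi]
      have e2 : c j = 1 := by simp [hcval, cOf, hdj]
      rw [e1, e2] at hcij
      exact absurd hcij (by decide)
    · have e1 : c i = 1 := by simp [hcval, cOf, hdi]
      have e2 : c j = 0 := by simp [hcval, cOf, hdj]
      rw [e1, e2] at hcij
      exact absurd hcij (by decide)
    · exact mUp_noncross (HOk_Hy hw) i.isLt j.isLt (hop_uy hdi) (hop_uy hdj) h1v
        (by rw [← hFi]; exact h2v) (by rw [← hFi, ← hFj]; exact h3v)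
  have hG : ∀ m, m ≤ 2*n → (HCol n f c 0 m = HxOf n w m ∧ HCol n f c 1 m = HyOf n w m) := by
    intro m
    induction m with
    | zero =>
      intro _
      have hx0 := (HOk_Hx hw).zero
      have hy0 := (HOk_Hy hw).zero
      constructor <;> simp [HCol, hx0, hy0]
    | succ m ih =>
      intro hle
      obtain ⟨ih1, ih2⟩ := ih (by omega)
      have hm2 : m < 2*n := by omega
      set M : Fin (2*n) := ⟨m, hm2⟩ with hM
      have hMv : (M : ℕ) = m := rfl
      have hsx : sCol n f c 0 m = (stepD n w M).1 ∧ sCol n f c 1 m = (stepD n w M).2 := by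
        rcases stepD_cases hw M with h | h | h | h
        · have hcM : c M = 0 := by simp [hcval, cOf, h]
          have hfM : M < f M := by
            rw [Fin.lt_def, hfval, F_ux h]
            exact (mUp_spec (HOk_Hx hw) M.isLt (hop_ux h)).1
          constructor
          · rw [show sCol n f c 0 m = sCol n f c 0 (M : ℕ) from rfl,
              sCol_op hcM hfM, h]
          · rw [show sCol n f c 1 m = sCol n f c 1 (M : ℕ) from rfl,
              sCol_nc (by rw [hcM]; decide), h]
        · have hcM : c M = 0 := by simp [hcval, cOf, h]
          have hfM : f M < M := by
            rw [Fin.lt_def, hfval, F_dx h]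
            exact (mDn_spec (HOk_Hx hw) (hcl_dx h)).1
          constructor
          · rw [show sCol n f c 0 m = sCol n f c 0 (M : ℕ) from rfl,
              sCol_cl hcM hfM, h]
          · rw [show sCol n f c 1 m = sCol n f c 1 (M : ℕ) from rfl,
              sCol_nc (by rw [hcM]; decide), h]
        · have hcM : c M = 1 := by simp [hcval, cOf, h]
          have hfM : M < f M := by
            rw [Fin.lt_def, hfval, F_uy h]
            exact (mUp_spec (HOk_Hy hw) M.isLt (hop_uy h)).1
          constructor
          · rw [show sCol n f c 0 m = sCol n f c 0 (M : ℕ) from rfl,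
              sCol_nc (by rw [hcM]; decide), h]
          · rw [show sCol n f c 1 m = sCol n f c 1 (M : ℕ) from rfl,
              sCol_op hcM hfM, h]
        · have hcM : c M = 1 := by simp [hcval, cOf, h]
          have hfM : f M < M := by
            rw [Fin.lt_def, hfval, F_dy h]
            exact (mDn_spec (HOk_Hy hw) (hcl_dy h)).1
          constructor
          · rw [show sCol n f c 0 m = sCol n f c 0 (M : ℕ) from rfl,
              sCol_nc (by rw [hcM]; decide), h]
          · rw [show sCol n f c 1 m = sCol n f c 1 (M : ℕ) from rfl,
              sCol_cl hcM hfM, h]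
      constructor
      · rw [HCol_succ, ih1, hsx.1]
        exact (Hx_step (w := w) M).symm
      · rw [HCol_succ, ih2, hsx.2]
        exact (Hy_step (w := w) M).symm
  have heq : walkOf n f c = w := by
    funext k
    show (HCol n f c 0 (k : ℕ), HCol n f c 1 (k : ℕ)) = w k
    have hk : (k : ℕ) ≤ 2*n := by omega
    rw [(hG (k : ℕ) hk).1, (hG (k : ℕ) hk).2, Hx_le hk, Hy_le hk]
  exact ⟨f, c, ⟨hinv, hne, hcol⟩, hncr, heq⟩

end Surj

end Guy

/-- Noncrossing 2-colored matchings on `{1,…,2n}` are in bijection with Guy's walks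
with `2n` steps. -/
theorem stmt9 (n : ℕ) :
    Nonempty ({p : (Fin (2*n) → Fin (2*n)) × (Fin (2*n) → Fin 2) //
        IsColoredMatching n 2 p.1 p.2 ∧ IsNoncrossing n 2 p.1 p.2} ≃
      {w : Fin (2*n + 1) → ℤ × ℤ // IsGuyWalk n w}) := by
  classical
  refine ⟨Equiv.ofBijective
    (fun p => ⟨Guy.walkOf n p.1.1 p.1.2, Guy.walkOf_isGuyWalk p.2.1⟩) ⟨?_, ?_⟩⟩
  · intro p q h
    have h' : Guy.walkOf n p.1.1 p.1.2 = Guy.walkOf n q.1.1 q.1.2 :=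
      congrArg Subtype.val h
    obtain ⟨hf, hc⟩ := Guy.walkOf_injective p.2.1 p.2.2 q.2.1 q.2.2 h'
    apply Subtype.ext
    exact Prod.ext_iff.mpr ⟨hf, hc⟩
  · intro wS
    obtain ⟨f, c, hm, hnc, heq⟩ := Guy.exists_matching wS.2
    exact ⟨⟨(f, c), hm, hnc⟩, Subtype.ext heq⟩
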